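/- Let (Ω, Σ, μ) be a finite measure space and X a Banach space with the following property (the Radon–Nikodým property with respect to μ): for every countably additive vector measure ν : Σ → X of bounded variation that vanishes on μ-null sets, there exists a Bochner-integrable function g : Ω → X such that ν(A) = (Bochner)∫_A g dμ for all A ∈ Σ. Then every RL-integrable function f : Ω → X has a Bochner-integrable equivalent. -/

import Mathlib

open MeasureTheory Set Pointwise

/-- A countable partition of `A` into pairwise disjoint measurable pieces
(possibly empty, so that finite partitions are included). -/
def IsRLPartition {Ω : Type*} [MeasurableSpace Ω] (A : Set Ω) (P : ℕ → Set Ω) : Prop :=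
  (∀ i, MeasurableSet (P i)) ∧ Pairwise (Function.onFun Disjoint P) ∧ (⋃ i, P i) = A

/-- `Γ` is finer than (inscribed into) `P`: every piece of `Γ` is contained in a piece of `P`. -/
def IsFinerPartition {Ω : Type*} (Γ P : ℕ → Set Ω) : Prop :=
  ∀ j, ∃ i, Γ j ⊆ P i

/-- `T` is a choice of sampling points for the partition `P`. -/
def IsSampling {Ω : Type*} (P : ℕ → Set Ω) (T : ℕ → Ω) : Prop :=
  ∀ i, (P i).Nonempty → T i ∈ P i

/-- The RL integral sum `S(f, P, T) = ∑ᵢ μ(Pᵢ) • f(Tᵢ)`. -/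
noncomputable def RLSum {Ω X : Type*} [MeasurableSpace Ω] [NormedAddCommGroup X]
    [NormedSpace ℝ X] (μ : Measure Ω) (f : Ω → X) (P : ℕ → Set Ω) (T : ℕ → Ω) : X :=
  ∑' i, (μ (P i)).toReal • f (T i)

/-- Absolute convergence of the RL integral sum. -/
def RLSumAbsConv {Ω X : Type*} [MeasurableSpace Ω] [NormedAddCommGroup X]
    (μ : Measure Ω) (f : Ω → X) (P : ℕ → Set Ω) (T : ℕ → Ω) : Prop :=
  Summable fun i => (μ (P i)).toReal * ‖f (T i)‖

/-- `f` is RL-integrable over `A` with RL integral `x`. -/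
def HasRLIntegral {Ω X : Type*} [MeasurableSpace Ω] [NormedAddCommGroup X] [NormedSpace ℝ X]
    (μ : Measure Ω) (f : Ω → X) (A : Set Ω) (x : X) : Prop :=
  ∀ ε > 0, ∃ P : ℕ → Set Ω, IsRLPartition A P ∧
    ∀ Γ : ℕ → Set Ω, IsRLPartition A Γ → IsFinerPartition Γ P →
      ∀ T : ℕ → Ω, IsSampling Γ T →
        RLSumAbsConv μ f Γ T ∧ ‖RLSum μ f Γ T - x‖ < ε

/-- `f` has a Lebesgue-integrable majorant, i.e. `f ∈ L̄₁(Ω, Σ, μ, X)`. -/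
def HasIntegrableMajorant {Ω X : Type*} [MeasurableSpace Ω] [NormedAddCommGroup X]
    (μ : Measure Ω) (f : Ω → X) : Prop :=
  ∃ g : Ω → ℝ, Integrable g μ ∧ ∀ t, ‖f t‖ ≤ g t

/-- The limit set `I(f)`: all limit points of the net of absolute RL integral sums. -/
def RLLimitSet {Ω X : Type*} [MeasurableSpace Ω] [NormedAddCommGroup X] [NormedSpace ℝ X]
    (μ : Measure Ω) (f : Ω → X) : Set X :=
  {x | ∀ ε > 0, ∀ P : ℕ → Set Ω, IsRLPartition Set.univ P →
    ∃ Γ : ℕ → Set Ω, IsRLPartition Set.univ Γ ∧ IsFinerPartition Γ P ∧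
      ∃ T : ℕ → Ω, IsSampling Γ T ∧ RLSumAbsConv μ f Γ T ∧ ‖RLSum μ f Γ T - x‖ < ε}

/-- `g` is a Bochner-integrable equivalent of `f`: `g` is Bochner integrable and the
RL integral of `f` over every measurable set equals the Bochner integral of `g` over it. -/
def BochnerEquivalent {Ω X : Type*} [MeasurableSpace Ω] [NormedAddCommGroup X] [NormedSpace ℝ X]
    (μ : Measure Ω) (f g : Ω → X) : Prop :=
  Integrable g μ ∧ ∀ A : Set Ω, MeasurableSet A → HasRLIntegral μ f A (∫ ω in A, g ω ∂μ)

/-- `f : [0,1] → X` is Riemann integrable with Riemann integral `x`. -/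
def HasRiemannIntegral {X : Type*} [NormedAddCommGroup X] [NormedSpace ℝ X]
    (f : ℝ → X) (x : X) : Prop :=
  ∀ ε > 0, ∃ δ > 0, ∀ (n : ℕ) (a : ℕ → ℝ) (t : ℕ → ℝ),
    a 0 = 0 → a n = 1 → (∀ i < n, a i ≤ a (i + 1)) →
    (∀ i < n, a (i + 1) - a i < δ) →
    (∀ i < n, t i ∈ Set.Icc (a i) (a (i + 1))) →
    ‖(∑ i ∈ Finset.range n, (a (i + 1) - a i) • f (t i)) - x‖ < ε

set_option linter.unusedSectionVars false

namespace RLAux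

open Filter Topology
open scoped ENNReal NNReal

variable {Ω X : Type*} [MeasurableSpace Ω] [NormedAddCommGroup X] [NormedSpace ℝ X]

lemma finer_refl (P : ℕ → Set Ω) : IsFinerPartition P P := fun j => ⟨j, subset_rfl⟩

lemma finer_trans {Γ R P : ℕ → Set Ω} (h1 : IsFinerPartition Γ R)
    (h2 : IsFinerPartition R P) : IsFinerPartition Γ P := by
  intro j
  obtain ⟨i, hi⟩ := h1 j
  obtain ⟨k, hk⟩ := h2 i
  exact ⟨k, hi.trans hk⟩

lemma piece_subset {A : Set Ω} {P : ℕ → Set Ω} (hP : IsRLPartition A P) (i : ℕ) :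
    P i ⊆ A := hP.2.2 ▸ subset_iUnion P i

/-- interleaving of two families. -/
def interleave (P Q : ℕ → Set Ω) : ℕ → Set Ω :=
  fun n => if Even n then P (n / 2) else Q (n / 2)

def interleaveT {α : Type*} (T U : ℕ → α) : ℕ → α :=
  fun n => if Even n then T (n / 2) else U (n / 2)

lemma interleave_even (P Q : ℕ → Set Ω) (k : ℕ) : interleave P Q (2 * k) = P k := by
  simp [interleave, Nat.mul_div_cancel_left _ (by norm_num : 0 < 2)]

lemma interleave_odd (P Q : ℕ → Set Ω) (k : ℕ) : interleave P Q (2 * k + 1) = Q k := by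
  have h1 : ¬ Even (2 * k + 1) := by simp [Nat.even_add_one]
  have h2 : (2 * k + 1) / 2 = k := by omega
  simp [interleave, h1, h2]

lemma interleaveT_even {α : Type*} (T U : ℕ → α) (k : ℕ) : interleaveT T U (2 * k) = T k := by
  simp [interleaveT, Nat.mul_div_cancel_left _ (by norm_num : 0 < 2)]

lemma interleaveT_odd {α : Type*} (T U : ℕ → α) (k : ℕ) : interleaveT T U (2 * k + 1) = U k := by
  have h1 : ¬ Even (2 * k + 1) := by simp [Nat.even_add_one]
  have h2 : (2 * k + 1) / 2 = k := by omega
  simp [interleaveT, h1, h2]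

lemma nat_rep (n : ℕ) : (∃ k, n = 2 * k) ∨ (∃ k, n = 2 * k + 1) := by
  rcases Nat.even_or_odd n with h | h
  · exact Or.inl (by obtain ⟨k, hk⟩ := h; exact ⟨k, by omega⟩)
  · exact Or.inr (by obtain ⟨k, hk⟩ := h; exact ⟨k, by omega⟩)

lemma isRLPartition_interleave {A B : Set Ω} {P Q : ℕ → Set Ω} (hAB : Disjoint A B)
    (hP : IsRLPartition A P) (hQ : IsRLPartition B Q) :
    IsRLPartition (A ∪ B) (interleave P Q) := by
  refine ⟨?_, ?_, ?_⟩
  · intro n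
    rcases nat_rep n with ⟨k, rfl⟩ | ⟨k, rfl⟩
    · rw [interleave_even]; exact hP.1 k
    · rw [interleave_odd]; exact hQ.1 k
  · intro n m hnm
    have dP := hP.2.1
    have dQ := hQ.2.1
    rcases nat_rep n with ⟨k, rfl⟩ | ⟨k, rfl⟩ <;> rcases nat_rep m with ⟨l, rfl⟩ | ⟨l, rfl⟩
    · have : k ≠ l := by omega
      simpa [Function.onFun, interleave_even] using dP this
    · simp only [Function.onFun, interleave_even, interleave_odd]
      exact hAB.mono (piece_subset hP k) (piece_subset hQ l)
    · simp only [Function.onFun, interleave_even, interleave_odd]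
      exact (hAB.mono (piece_subset hP l) (piece_subset hQ k)).symm
    · have : k ≠ l := by omega
      simpa [Function.onFun, interleave_odd] using dQ this
  · ext t
    simp only [mem_iUnion, mem_union]
    constructor
    · rintro ⟨n, hn⟩
      rcases nat_rep n with ⟨k, rfl⟩ | ⟨k, rfl⟩
      · rw [interleave_even] at hn; exact Or.inl (piece_subset hP k hn)
      · rw [interleave_odd] at hn; exact Or.inr (piece_subset hQ k hn)
    · rintro (ht | ht)
      · rw [← hP.2.2] at ht
        obtain ⟨k, hk⟩ := mem_iUnion.1 ht
        exact ⟨2 * k, by rwa [interleave_even]⟩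
      · rw [← hQ.2.2] at ht
        obtain ⟨k, hk⟩ := mem_iUnion.1 ht
        exact ⟨2 * k + 1, by rwa [interleave_odd]⟩

lemma isSampling_interleave {P Q : ℕ → Set Ω} {T U : ℕ → Ω} (hT : IsSampling P T)
    (hU : IsSampling Q U) : IsSampling (interleave P Q) (interleaveT T U) := by
  intro n hn
  rcases nat_rep n with ⟨k, rfl⟩ | ⟨k, rfl⟩
  · rw [interleave_even] at hn ⊢; rw [interleaveT_even]; exact hT k hn
  · rw [interleave_odd] at hn ⊢; rw [interleaveT_odd]; exact hU k hn

lemma finer_interleave {P Q R : ℕ → Set Ω} (hP : IsFinerPartition P R)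
    (hQ : IsFinerPartition Q R) : IsFinerPartition (interleave P Q) R := by
  intro n
  rcases nat_rep n with ⟨k, rfl⟩ | ⟨k, rfl⟩
  · rw [interleave_even]; exact hP k
  · rw [interleave_odd]; exact hQ k

lemma interleave_cases (P Q : ℕ → Set Ω) (n : ℕ) :
    (∃ k, interleave P Q n = P k) ∨ (∃ k, interleave P Q n = Q k) := by
  rcases nat_rep n with ⟨k, rfl⟩ | ⟨k, rfl⟩
  · exact Or.inl ⟨k, interleave_even P Q k⟩
  · exact Or.inr ⟨k, interleave_odd P Q k⟩

/-- common refinement of two partitions of the same set. -/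
def refinePair (P Q : ℕ → Set Ω) : ℕ → Set Ω :=
  fun n => P (Nat.unpair n).1 ∩ Q (Nat.unpair n).2

lemma unpair_injective : Function.Injective (Nat.unpair) := by
  intro n m h
  have := Nat.pair_unpair n
  rw [h, Nat.pair_unpair] at this
  exact this.symm

lemma isRLPartition_refinePair {A : Set Ω} {P Q : ℕ → Set Ω}
    (hP : IsRLPartition A P) (hQ : IsRLPartition A Q) :
    IsRLPartition A (refinePair P Q) := by
  refine ⟨fun n => (hP.1 _).inter (hQ.1 _), ?_, ?_⟩
  · intro n m hnm
    have h2 : Nat.unpair n ≠ Nat.unpair m := fun h => hnm (unpair_injective h)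
    by_cases h1 : (Nat.unpair n).1 = (Nat.unpair m).1
    · have : (Nat.unpair n).2 ≠ (Nat.unpair m).2 := by
        intro h2'
        exact h2 (Prod.ext h1 h2')
      exact Disjoint.mono inter_subset_right inter_subset_right
        (hQ.2.1 this)
    · exact Disjoint.mono inter_subset_left inter_subset_left (hP.2.1 h1)
  · ext t
    simp only [mem_iUnion, refinePair]
    constructor
    · rintro ⟨n, hn, -⟩
      exact piece_subset hP _ hn
    · intro ht
      have h1 : t ∈ ⋃ i, P i := hP.2.2.symm ▸ ht
      have h2 : t ∈ ⋃ i, Q i := hQ.2.2.symm ▸ ht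
      obtain ⟨i, hi⟩ := mem_iUnion.1 h1
      obtain ⟨j, hj⟩ := mem_iUnion.1 h2
      refine ⟨Nat.pair i j, ?_, ?_⟩ <;> rw [Nat.unpair_pair] <;> assumption

lemma refinePair_finer_left (P Q : ℕ → Set Ω) : IsFinerPartition (refinePair P Q) P :=
  fun n => ⟨(Nat.unpair n).1, inter_subset_left⟩

lemma refinePair_finer_right (P Q : ℕ → Set Ω) : IsFinerPartition (refinePair P Q) Q :=
  fun n => ⟨(Nat.unpair n).2, inter_subset_right⟩

lemma isRLPartition_inter {P : ℕ → Set Ω} (hP : IsRLPartition univ P) {A : Set Ω}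
    (hA : MeasurableSet A) : IsRLPartition A (fun i => P i ∩ A) := by
  refine ⟨fun i => (hP.1 i).inter hA, ?_, ?_⟩
  · intro n m hnm
    exact Disjoint.mono inter_subset_left inter_subset_left (hP.2.1 hnm)
  · rw [← iUnion_inter, hP.2.2, univ_inter]

lemma finer_inter (P : ℕ → Set Ω) (A : Set Ω) : IsFinerPartition (fun i => P i ∩ A) P :=
  fun i => ⟨i, inter_subset_left⟩



variable {μ : Measure Ω} [IsFiniteMeasure μ] {f : Ω → X}

lemma norm_term (P : ℕ → Set Ω) (T : ℕ → Ω) (i : ℕ) :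
    ‖(μ (P i)).toReal • f (T i)‖ = (μ (P i)).toReal * ‖f (T i)‖ := by
  rw [norm_smul, Real.norm_of_nonneg ENNReal.toReal_nonneg]

lemma summable_vec_of_absconv {P : ℕ → Set Ω} {T : ℕ → Ω} [CompleteSpace X]
    (h : RLSumAbsConv μ f P T) : Summable fun i => (μ (P i)).toReal • f (T i) := by
  apply Summable.of_norm
  simpa only [norm_term, RLSumAbsConv] using h

lemma norm_rlsum_le [CompleteSpace X] {P : ℕ → Set Ω} {T : ℕ → Ω}
    (h : RLSumAbsConv μ f P T) :
    ‖RLSum μ f P T‖ ≤ ∑' i, (μ (P i)).toReal * ‖f (T i)‖ := by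
  have := norm_tsum_le_tsum_norm (f := fun i => (μ (P i)).toReal • f (T i))
    (by simpa only [norm_term, RLSumAbsConv] using h)
  simpa only [norm_term, RLSum] using this

lemma two_mul_injective : Function.Injective (fun k : ℕ => 2 * k) := fun a b h => by simpa using h

lemma two_mul_add_one_injective : Function.Injective (fun k : ℕ => 2 * k + 1) :=
  fun a b h => by simpa using h

set_option maxHeartbeats 1000000 in
lemma interleave_split [CompleteSpace X] {P Q : ℕ → Set Ω} {T U : ℕ → Ω}
    (hsum : RLSumAbsConv μ f (interleave P Q) (interleaveT T U)) :
    RLSumAbsConv μ f P T ∧ RLSumAbsConv μ f Q U ∧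
      RLSum μ f (interleave P Q) (interleaveT T U) = RLSum μ f P T + RLSum μ f Q U := by
  have hs : Summable (fun i => (μ (interleave P Q i)).toReal * ‖f (interleaveT T U i)‖) := hsum
  have he : RLSumAbsConv μ f P T := by
    have h2 := hs.comp_injective two_mul_injective
    refine Summable.congr h2 fun k => ?_
    show (μ (interleave P Q (2 * k))).toReal * ‖f (interleaveT T U (2 * k))‖ = _
    rw [interleave_even, interleaveT_even]
  have ho : RLSumAbsConv μ f Q U := by
    have h2 := hs.comp_injective two_mul_add_one_injective
    refine Summable.congr h2 fun k => ?_
    show (μ (interleave P Q (2 * k + 1))).toReal * ‖f (interleaveT T U (2 * k + 1))‖ = _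
    rw [interleave_odd, interleaveT_odd]
  refine ⟨he, ho, ?_⟩
  have hP : HasSum (fun k => (μ (interleave P Q (2 * k))).toReal •
      f (interleaveT T U (2 * k))) (RLSum μ f P T) := by
    have : (fun k => (μ (interleave P Q (2 * k))).toReal • f (interleaveT T U (2 * k)))
        = fun k => (μ (P k)).toReal • f (T k) := by
      funext k; rw [interleave_even, interleaveT_even]
    rw [this]
    exact (summable_vec_of_absconv he).hasSum
  have hQ : HasSum (fun k => (μ (interleave P Q (2 * k + 1))).toReal •
      f (interleaveT T U (2 * k + 1))) (RLSum μ f Q U) := by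
    have : (fun k => (μ (interleave P Q (2 * k + 1))).toReal • f (interleaveT T U (2 * k + 1)))
        = fun k => (μ (Q k)).toReal • f (U k) := by
      funext k; rw [interleave_odd, interleaveT_odd]
    rw [this]
    exact (summable_vec_of_absconv ho).hasSum
  exact (hP.even_add_odd hQ).tsum_eq


open ENNReal in
lemma abs_bound [CompleteSpace X] {x : X} (hx : HasRLIntegral μ f univ x)
    (pt : Set Ω → Ω) (hpt : ∀ S : Set Ω, S.Nonempty → pt S ∈ S) :
    ∃ M : ℝ≥0∞, M ≠ ∞ ∧ ∃ P : ℕ → Set Ω, IsRLPartition univ P ∧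
      ∀ {ι : Type*} (Δ : ι → Set Ω) (t : ι → Ω), (∀ j, MeasurableSet (Δ j)) →
        Pairwise (Function.onFun Disjoint Δ) → (∀ j, ∃ i, Δ j ⊆ P i) →
        (∀ j, (Δ j).Nonempty → t j ∈ Δ j) →
        ∑' j, μ (Δ j) * (‖f (t j)‖₊ : ℝ≥0∞) ≤ M := by
  classical
  obtain ⟨P, hP, hP2⟩ := hx 1 one_pos
  set sQ : ℕ → ℝ≥0∞ := fun i => ⨆ t ∈ P i, (‖f t‖₊ : ℝ≥0∞) with hsQ
  set c : ℕ → ℝ≥0∞ := fun i => μ (P i) * sQ i with hc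
  -- Step A : each c i is finite
  have hcfin : ∀ i, c i ≠ ∞ := by
    intro i
    by_cases h0 : μ (P i) = 0
    · simp [hc, h0]
    have hne : (P i).Nonempty := by
      rcases eq_empty_or_nonempty (P i) with h | h
      · exact absurd (h ▸ measure_empty) h0
      · exact h
    set t0 := pt (P i) with ht0def
    have ht0 : t0 ∈ P i := hpt _ hne
    have hμpos : 0 < (μ (P i)).toReal :=
      ENNReal.toReal_pos h0 (measure_ne_top μ _)
    have key : ∀ t ∈ P i, ‖f t‖ ≤ ‖f t0‖ + 2 / (μ (P i)).toReal := by
      intro t ht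
      set T1 : ℕ → Ω := fun j => if j = i then t else pt (P j) with hT1def
      set T0 : ℕ → Ω := fun j => pt (P j) with hT0def
      have hT1 : IsSampling P T1 := by
        intro j hj
        by_cases hji : j = i
        · subst hji; simpa [hT1def] using ht
        · simpa [hT1def, hji] using hpt _ hj
      have hT0 : IsSampling P T0 := fun j hj => hpt _ hj
      obtain ⟨conv1, lt1⟩ := hP2 P hP (finer_refl P) T1 hT1
      obtain ⟨conv0, lt0⟩ := hP2 P hP (finer_refl P) T0 hT0
      have hsub : RLSum μ f P T1 - RLSum μ f P T0 = (μ (P i)).toReal • (f t - f t0) := by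
        rw [RLSum, RLSum, ← Summable.tsum_sub (summable_vec_of_absconv conv1)
          (summable_vec_of_absconv conv0)]
        rw [tsum_eq_single i ?_]
        · have h1 : T1 i = t := by simp [hT1def]
          have h0' : T0 i = t0 := rfl
          rw [h1, h0', smul_sub]
        · intro j hj
          have : T1 j = T0 j := by simp [hT1def, hT0def, hj]
          rw [this, sub_self]
      have hlt2 : (μ (P i)).toReal * ‖f t - f t0‖ < 2 := by
        have h1 : ‖RLSum μ f P T1 - RLSum μ f P T0‖ < 2 := by
          calc ‖RLSum μ f P T1 - RLSum μ f P T0‖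
              ≤ ‖RLSum μ f P T1 - x‖ + ‖x - RLSum μ f P T0‖ :=
                norm_sub_le_norm_sub_add_norm_sub _ _ _
            _ < 1 + 1 := by
                rw [norm_sub_rev x]
                exact add_lt_add lt1 lt0
            _ = 2 := by norm_num
        rw [hsub, norm_smul, Real.norm_of_nonneg ENNReal.toReal_nonneg] at h1
        exact h1
      have hosc : ‖f t - f t0‖ ≤ 2 / (μ (P i)).toReal := by
        rw [le_div_iff₀ hμpos]
        linarith [hlt2]
      calc ‖f t‖ ≤ ‖f t0‖ + ‖f t - f t0‖ := by
            have := norm_add_le (f t0) (f t - f t0)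
            simpa using this
        _ ≤ ‖f t0‖ + 2 / (μ (P i)).toReal := by linarith
    have hsup : sQ i ≤ ENNReal.ofReal (‖f t0‖ + 2 / (μ (P i)).toReal) := by
      refine iSup₂_le fun t ht => ?_
      rw [← ENNReal.ofReal_coe_nnreal, coe_nnnorm]
      exact ENNReal.ofReal_le_ofReal (key t ht)
    have : c i ≤ μ (P i) * ENNReal.ofReal (‖f t0‖ + 2 / (μ (P i)).toReal) :=
      mul_le_mul_right hsup _
    exact ne_top_of_le_ne_top
      (ENNReal.mul_ne_top (measure_ne_top μ _) ENNReal.ofReal_ne_top) this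
  -- Step B : the total sum is finite
  have hM : ∑' i, c i ≠ ∞ := by
    by_contra hM
    have hch : ∀ i, ∃ tt : Ω, ((P i).Nonempty → tt ∈ P i) ∧
        c i / 2 ≤ μ (P i) * (‖f tt‖₊ : ℝ≥0∞) := by
      intro i
      by_cases hc0 : c i = 0
      · exact ⟨pt (P i), fun h => hpt _ h, by simp [hc0]⟩
      have hlt : c i / 2 < c i := ENNReal.half_lt_self hc0 (hcfin i)
      have hrepr : c i = ⨆ t, ⨆ _ : t ∈ P i, μ (P i) * (‖f t‖₊ : ℝ≥0∞) := by
        rw [hc, hsQ]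
        simp only [ENNReal.mul_iSup]
      have hlt' : c i / 2 < ⨆ t, ⨆ _ : t ∈ P i, μ (P i) * (‖f t‖₊ : ℝ≥0∞) := by
        rw [← hrepr]; exact hlt
      obtain ⟨t, hlt2⟩ := lt_iSup_iff.1 hlt'
      obtain ⟨ht, hlt3⟩ := lt_iSup_iff.1 hlt2
      exact ⟨t, fun _ => ht, le_of_lt hlt3⟩
    choose T hT1 hT2 using hch
    obtain ⟨conv, -⟩ := hP2 P hP (finer_refl P) T (fun i h => hT1 i h)
    have hconv : Summable fun i => (μ (P i)).toReal * ‖f (T i)‖ := conv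
    have hfin : ∑' i, μ (P i) * (‖f (T i)‖₊ : ℝ≥0∞) ≠ ∞ := by
      set g : ℕ → NNReal := fun i => (μ (P i)).toNNReal * ‖f (T i)‖₊ with hg
      have hgs : Summable g := by
        rw [← NNReal.summable_coe]
        refine hconv.congr fun i => ?_
        simp [hg, NNReal.coe_mul, ENNReal.toReal]
      have := ENNReal.tsum_coe_ne_top_iff_summable.2 hgs
      convert this using 2 with i
      simp [hg, ENNReal.coe_mul, ENNReal.coe_toNNReal (measure_ne_top μ _)]
    refine hfin ?_
    have hle : ∑' i, c i / 2 ≤ ∑' i, μ (P i) * (‖f (T i)‖₊ : ℝ≥0∞) :=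
      ENNReal.tsum_le_tsum hT2
    have h2 : ∑' i, c i / 2 = (∑' i, c i) / 2 := by
      simp only [div_eq_mul_inv, ENNReal.tsum_mul_right]
    rw [h2, hM] at hle
    have : (⊤ : ℝ≥0∞) / 2 = ⊤ := by
      rw [div_eq_mul_inv]
      exact ENNReal.top_mul (by simp)
    rw [this, top_le_iff] at hle
    exact hle
  refine ⟨∑' i, c i, hM, P, hP, ?_⟩
  -- Step C : the bound
  intro ι Δ t hmeas hdisj hfine hsamp'
  choose iF hiF using hfine
  have termle : ∀ j, μ (Δ j) * (‖f (t j)‖₊ : ℝ≥0∞) ≤ μ (Δ j) * sQ (iF j) := by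
    intro j
    rcases eq_empty_or_nonempty (Δ j) with h | h
    · simp [h]
    · refine mul_le_mul_right ?_ _
      exact le_iSup₂ (f := fun t' (_ : t' ∈ P (iF j)) => (‖f t'‖₊ : ℝ≥0∞)) (t j)
        (hiF j (hsamp' j h))
  refine le_trans (ENNReal.tsum_le_tsum termle) ?_
  rw [ENNReal.tsum_eq_iSup_sum]
  refine iSup_le fun F => ?_
  rw [← Finset.sum_fiberwise_of_maps_to (g := iF) (t := F.image iF)
    (fun j hj => Finset.mem_image_of_mem iF hj) (fun j => μ (Δ j) * sQ (iF j))]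
  refine le_trans (Finset.sum_le_sum (fun i _ => ?_)) (ENNReal.sum_le_tsum _)
  have hcongr : ∀ j ∈ F.filter (fun j => iF j = i), μ (Δ j) * sQ (iF j) = μ (Δ j) * sQ i := by
    intro j hj
    rw [(Finset.mem_filter.1 hj).2]
  rw [Finset.sum_congr rfl hcongr, ← Finset.sum_mul]
  have hmeq : ∑ j ∈ F.filter (fun j => iF j = i), μ (Δ j) =
      μ (⋃ j ∈ F.filter (fun j => iF j = i), Δ j) := by
    rw [measure_biUnion_finset (fun a _ b _ hab => hdisj hab) (fun b _ => hmeas b)]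
  rw [hmeq]
  refine mul_le_mul_left (measure_mono ?_) _
  refine iUnion₂_subset fun j hj => ?_
  rw [← (Finset.mem_filter.1 hj).2]
  exact hiF j


variable [CompleteSpace X]

lemma cauchy_pieces {x : X} (hx : HasRLIntegral μ f univ x)
    (pt : Set Ω → Ω) (hpt : ∀ S : Set Ω, S.Nonempty → pt S ∈ S)
    {ε : ℝ} (hε : 0 < ε) :
    ∃ P : ℕ → Set Ω, IsRLPartition univ P ∧
      ∀ A : Set Ω, MeasurableSet A →
      ∀ Γ Γ' : ℕ → Set Ω, IsRLPartition A Γ → IsFinerPartition Γ P →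
        IsRLPartition A Γ' → IsFinerPartition Γ' P →
      ∀ T T' : ℕ → Ω, IsSampling Γ T → IsSampling Γ' T' →
        RLSumAbsConv μ f Γ T ∧
        ‖RLSum μ f Γ T - RLSum μ f Γ' T'‖ ≤ 2 * ε := by
  obtain ⟨P, hP, hP2⟩ := hx ε hε
  refine ⟨P, hP, ?_⟩
  intro A hA Γ Γ' hΓ hΓf hΓ' hΓf' T T' hT hT'
  set Q : ℕ → Set Ω := fun i => P i ∩ Aᶜ with hQdef
  have hQpart : IsRLPartition Aᶜ Q := isRLPartition_inter hP hA.compl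
  set U : ℕ → Ω := fun i => pt (Q i) with hUdef
  have hU : IsSampling Q U := fun i h => hpt _ h
  have hcomb : IsRLPartition univ (interleave Γ Q) := by
    have := isRLPartition_interleave disjoint_compl_right hΓ hQpart
    rwa [union_compl_self] at this
  have hcomb' : IsRLPartition univ (interleave Γ' Q) := by
    have := isRLPartition_interleave disjoint_compl_right hΓ' hQpart
    rwa [union_compl_self] at this
  have hfinQ : IsFinerPartition Q P := finer_inter P Aᶜ
  obtain ⟨conv1, lt1⟩ := hP2 _ hcomb (finer_interleave hΓf hfinQ) _
    (isSampling_interleave hT hU)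
  obtain ⟨conv1', lt1'⟩ := hP2 _ hcomb' (finer_interleave hΓf' hfinQ) _
    (isSampling_interleave hT' hU)
  obtain ⟨ha, hb, heq⟩ := interleave_split conv1
  obtain ⟨ha', hb', heq'⟩ := interleave_split conv1'
  refine ⟨ha, ?_⟩
  have hdiff : RLSum μ f Γ T - RLSum μ f Γ' T' =
      RLSum μ f (interleave Γ Q) (interleaveT T U) -
        RLSum μ f (interleave Γ' Q) (interleaveT T' U) := by
    rw [heq, heq']; abel
  rw [hdiff]
  calc ‖RLSum μ f (interleave Γ Q) (interleaveT T U) -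
        RLSum μ f (interleave Γ' Q) (interleaveT T' U)‖
      ≤ ‖RLSum μ f (interleave Γ Q) (interleaveT T U) - x‖ +
        ‖x - RLSum μ f (interleave Γ' Q) (interleaveT T' U)‖ :=
        norm_sub_le_norm_sub_add_norm_sub _ _ _
    _ ≤ ε + ε := by
        rw [norm_sub_rev x]
        exact add_le_add lt1.le lt1'.le
    _ = 2 * ε := by ring

lemma integral_unique {A : Set Ω} {y y' : X} (pt : Set Ω → Ω)
    (hpt : ∀ S : Set Ω, S.Nonempty → pt S ∈ S)
    (hy : HasRLIntegral μ f A y) (hy' : HasRLIntegral μ f A y') : y = y' := by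
  have key : ∀ ε : ℝ, 0 < ε → ‖y - y'‖ < 2 * ε := by
    intro ε hε
    obtain ⟨P, hP, hP2⟩ := hy ε hε
    obtain ⟨P', hP', hP2'⟩ := hy' ε hε
    have hpart := isRLPartition_refinePair hP hP'
    set T : ℕ → Ω := fun i => pt (refinePair P P' i) with hT
    have hsamp : IsSampling (refinePair P P') T := fun i h => hpt _ h
    obtain ⟨-, h1⟩ := hP2 _ hpart (refinePair_finer_left P P') T hsamp
    obtain ⟨-, h2⟩ := hP2' _ hpart (refinePair_finer_right P P') T hsamp
    have htri : ‖y - y'‖ ≤ ‖RLSum μ f (refinePair P P') T - y‖ +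
        ‖RLSum μ f (refinePair P P') T - y'‖ := by
      have h3 := norm_sub_le_norm_sub_add_norm_sub y (RLSum μ f (refinePair P P') T) y'
      rw [norm_sub_rev y (RLSum μ f (refinePair P P') T)] at h3
      linarith
    have := add_lt_add h1 h2
    linarith
  by_contra hne
  have hpos : 0 < ‖y - y'‖ := by
    rw [norm_pos_iff, sub_ne_zero]
    exact hne
  have := key (‖y - y'‖ / 4) (by positivity)
  linarith

set_option maxHeartbeats 1000000 in
lemma hasRL_null {A : Set Ω} (hA : MeasurableSet A) (h0 : μ A = 0) :
    HasRLIntegral μ f A 0 := by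
  intro ε hε
  refine ⟨fun i => if i = 0 then A else ∅, ⟨?_, ?_, ?_⟩, ?_⟩
  · intro i; by_cases h : i = 0 <;> simp [h, hA]
  · intro i j hij
    simp only [Function.onFun]
    by_cases hi : i = 0 <;> by_cases hj : j = 0 <;> simp [hi, hj] at hij ⊢
  · ext t; simp only [mem_iUnion]
    constructor
    · rintro ⟨i, hi⟩; by_cases h : i = 0
      · simpa [h] using hi
      · simp [h] at hi
    · intro ht; exact ⟨0, by simpa using ht⟩
  · intro Γ hΓ hΓf T hT
    have hz : ∀ j, μ (Γ j) = 0 :=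
      fun j => measure_mono_null (piece_subset hΓ j) h0
    have habs0 : Summable (fun i => (μ (Γ i)).toReal * ‖f (T i)‖) := by
      have he : (fun i => (μ (Γ i)).toReal * ‖f (T i)‖) = fun _ => (0 : ℝ) := by
        funext i; rw [hz i]; simp
      rw [he]; exact summable_zero
    refine ⟨habs0, ?_⟩
    have hS : RLSum μ f Γ T = 0 := by
      rw [RLSum]
      have he : (fun i => (μ (Γ i)).toReal • f (T i)) = fun _ => (0 : X) := by
        funext i; rw [hz i]; simp
      rw [he, tsum_zero]
    rw [hS]
    simpa using hε


lemma exists_hasRLIntegral {x : X} (hx : HasRLIntegral μ f univ x)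
    (pt : Set Ω → Ω) (hpt : ∀ S : Set Ω, S.Nonempty → pt S ∈ S)
    {A : Set Ω} (hA : MeasurableSet A) : ∃ y, HasRLIntegral μ f A y := by
  have hbase : ∀ n : ℕ, ∃ P : ℕ → Set Ω, IsRLPartition univ P ∧
      ∀ A : Set Ω, MeasurableSet A →
      ∀ Γ Γ' : ℕ → Set Ω, IsRLPartition A Γ → IsFinerPartition Γ P →
        IsRLPartition A Γ' → IsFinerPartition Γ' P →
      ∀ T T' : ℕ → Ω, IsSampling Γ T → IsSampling Γ' T' →
        RLSumAbsConv μ f Γ T ∧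
        ‖RLSum μ f Γ T - RLSum μ f Γ' T'‖ ≤ 2 * (1 / (n + 1)) := by
    intro n
    exact cauchy_pieces hx pt hpt (by positivity : (0:ℝ) < 1 / (n + 1))
  choose Pb hPb hC using hbase
  set R : ℕ → ℕ → Set Ω := fun n => Nat.rec (motive := fun _ => ℕ → Set Ω)
    (fun i => Pb 0 i ∩ A)
    (fun m Rm => refinePair Rm (fun i => Pb (m + 1) i ∩ A)) n with hRdef
  have hRs : ∀ n, R (n + 1) = refinePair (R n) (fun i => Pb (n + 1) i ∩ A) := fun n => rfl
  have hRpart : ∀ n, IsRLPartition A (R n) := by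
    intro n
    induction n with
    | zero => exact isRLPartition_inter (hPb 0) hA
    | succ m ih =>
        rw [hRs m]
        exact isRLPartition_refinePair ih (isRLPartition_inter (hPb (m + 1)) hA)
  have hRfb : ∀ n, IsFinerPartition (R n) (Pb n) := by
    intro n
    cases n with
    | zero => exact finer_inter _ _
    | succ m =>
        rw [hRs m]
        exact finer_trans (refinePair_finer_right _ _) (finer_inter _ _)
  have hRmono : ∀ n m, n ≤ m → IsFinerPartition (R m) (R n) := by
    intro n m hnm
    induction m with
    | zero =>
        have : n = 0 := Nat.le_zero.1 hnm
        subst this; exact finer_refl _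
    | succ k ih =>
        rcases Nat.lt_or_ge n (k+1) with h | h
        · have h1 : IsFinerPartition (R (k+1)) (R k) := by
            rw [hRs k]; exact refinePair_finer_left _ _
          exact finer_trans h1 (ih (Nat.lt_succ_iff.1 h))
        · have : n = k + 1 := le_antisymm hnm h
          subst this; exact finer_refl _
  have hRf : ∀ n m, n ≤ m → IsFinerPartition (R m) (Pb n) :=
    fun n m hnm => finer_trans (hRmono n m hnm) (hRfb n)
  set T : ℕ → ℕ → Ω := fun n i => pt (R n i) with hTdef
  have hTs : ∀ n, IsSampling (R n) (T n) := fun n i h => hpt _ h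
  set v : ℕ → X := fun n => RLSum μ f (R n) (T n) with hvdef
  have hcauchy : CauchySeq v := by
    refine cauchySeq_of_le_tendsto_0 (fun N => 2 * (1 / ((N:ℝ) + 1))) ?_ ?_
    · intro n m N hNn hNm
      rw [dist_eq_norm]
      exact (hC N A hA (R n) (R m) (hRpart n) (hRf N n hNn) (hRpart m) (hRf N m hNm)
        (T n) (T m) (hTs n) (hTs m)).2
    · have h1 := tendsto_one_div_add_atTop_nhds_zero_nat (𝕜 := ℝ)
      have h2 := h1.const_mul (2 : ℝ)
      simpa using h2
  obtain ⟨y, hy⟩ := cauchySeq_tendsto_of_complete hcauchy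
  refine ⟨y, ?_⟩
  intro ε hε
  obtain ⟨n, hn⟩ := exists_nat_one_div_lt (show (0:ℝ) < ε / 4 by linarith)
  refine ⟨R n, hRpart n, ?_⟩
  intro Γ hΓ hΓf T' hT'
  have hf1 : IsFinerPartition Γ (Pb n) := finer_trans hΓf (hRfb n)
  have habs : RLSumAbsConv μ f Γ T' :=
    (hC n A hA Γ Γ hΓ hf1 hΓ hf1 T' T' hT' hT').1
  refine ⟨habs, ?_⟩
  have key : ∀ m, n ≤ m → ‖RLSum μ f Γ T' - v m‖ ≤ 2 * (1 / (n + 1)) := by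
    intro m hm
    exact (hC n A hA Γ (R m) hΓ hf1 (hRpart m) (hRf n m hm) T' (T m) hT' (hTs m)).2
  have hlim : Tendsto (fun m => ‖RLSum μ f Γ T' - v m‖) atTop
      (𝓝 ‖RLSum μ f Γ T' - y‖) := ((hy.const_sub _).norm)
  have hfin : ‖RLSum μ f Γ T' - y‖ ≤ 2 * (1 / (n + 1)) :=
    le_of_tendsto hlim (Filter.eventually_atTop.2 ⟨n, key⟩)
  have : (2:ℝ) * (1 / (n + 1)) < ε / 2 := by
    have : (0:ℝ) < (n:ℝ) + 1 := by positivity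
    linarith
  linarith


set_option maxHeartbeats 1000000 in
lemma hasRL_union {A B : Set Ω} (hA : MeasurableSet A) (hB : MeasurableSet B)
    (hAB : Disjoint A B) {a b : X}
    (ha : HasRLIntegral μ f A a) (hb : HasRLIntegral μ f B b) :
    HasRLIntegral μ f (A ∪ B) (a + b) := by
  intro ε hε
  obtain ⟨PA, hPA, hPA2⟩ := ha (ε / 2) (by linarith)
  obtain ⟨PB, hPB, hPB2⟩ := hb (ε / 2) (by linarith)
  refine ⟨interleave PA PB, isRLPartition_interleave hAB hPA hPB, ?_⟩
  intro Γ hΓ hΓf T hT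
  classical
  set ΓA : ℕ → Set Ω := fun j => if Γ j ⊆ A then Γ j else ∅ with hΓA
  set ΓB : ℕ → Set Ω := fun j => if Γ j ⊆ A then ∅ else Γ j with hΓB
  have hsub : ∀ j, Γ j ⊆ A ∨ Γ j ⊆ B := by
    intro j
    obtain ⟨i, hi⟩ := hΓf j
    rcases interleave_cases PA PB i with ⟨k, hk⟩ | ⟨k, hk⟩
    · exact Or.inl (hi.trans (hk ▸ piece_subset hPA k))
    · exact Or.inr (hi.trans (hk ▸ piece_subset hPB k))
  have hAsubΓ : ∀ j, ΓA j ⊆ Γ j := by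
    intro j; rw [hΓA]; by_cases h : Γ j ⊆ A <;> simp [h]
  have hBsubΓ : ∀ j, ΓB j ⊆ Γ j := by
    intro j; rw [hΓB]; by_cases h : Γ j ⊆ A <;> simp [h]
  have hAsub : ∀ j, ΓA j ⊆ A := by
    intro j; rw [hΓA]; by_cases h : Γ j ⊆ A <;> simp [h]
  have hBsub : ∀ j, ΓB j ⊆ B := by
    intro j; rw [hΓB]
    by_cases h : Γ j ⊆ A
    · simp [h]
    · simp only [if_neg h]; exact (hsub j).resolve_left h
  have hpartA : IsRLPartition A ΓA := by
    refine ⟨?_, ?_, ?_⟩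
    · intro j; rw [hΓA]; by_cases h : Γ j ⊆ A <;> simp [h, hΓ.1 j]
    · intro i j hij
      exact Disjoint.mono (hAsubΓ i) (hAsubΓ j) (hΓ.2.1 hij)
    · ext t
      simp only [mem_iUnion]
      constructor
      · rintro ⟨j, hj⟩; exact hAsub j hj
      · intro ht
        have h1 : t ∈ ⋃ j, Γ j := by rw [hΓ.2.2]; exact Or.inl ht
        obtain ⟨j, hj⟩ := mem_iUnion.1 h1
        have hjA : Γ j ⊆ A := by
          rcases hsub j with h | h
          · exact h
          · exact absurd (hAB.le_bot ⟨ht, h hj⟩ : t ∈ (∅ : Set Ω)) (notMem_empty t)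
        exact ⟨j, by rw [hΓA]; simpa [hjA] using hj⟩
  have hpartB : IsRLPartition B ΓB := by
    refine ⟨?_, ?_, ?_⟩
    · intro j; rw [hΓB]; by_cases h : Γ j ⊆ A <;> simp [h, hΓ.1 j]
    · intro i j hij
      exact Disjoint.mono (hBsubΓ i) (hBsubΓ j) (hΓ.2.1 hij)
    · ext t
      simp only [mem_iUnion]
      constructor
      · rintro ⟨j, hj⟩; exact hBsub j hj
      · intro ht
        have h1 : t ∈ ⋃ j, Γ j := by rw [hΓ.2.2]; exact Or.inr ht
        obtain ⟨j, hj⟩ := mem_iUnion.1 h1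
        have hjA : ¬ (Γ j ⊆ A) := by
          intro h
          have : t ∈ (∅ : Set Ω) := hAB.le_bot ⟨h hj, ht⟩
          exact absurd this (notMem_empty t)
        exact ⟨j, by rw [hΓB]; simpa [hjA] using hj⟩
  have hfA : IsFinerPartition ΓA PA := by
    intro j
    by_cases h : Γ j ⊆ A
    · obtain ⟨i, hi⟩ := hΓf j
      rcases interleave_cases PA PB i with ⟨k, hk⟩ | ⟨k, hk⟩
      · exact ⟨k, (hAsubΓ j).trans (hi.trans (hk ▸ subset_rfl))⟩
      · refine ⟨0, ?_⟩
        intro t ht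
        have htA : t ∈ A := hAsub j ht
        have htB : t ∈ B := (hi.trans (hk ▸ piece_subset hPB k)) (hAsubΓ j ht)
        exact absurd (hAB.le_bot ⟨htA, htB⟩) (notMem_empty t)
    · exact ⟨0, by rw [hΓA]; simp [h]⟩
  have hfB : IsFinerPartition ΓB PB := by
    intro j
    by_cases h : Γ j ⊆ A
    · exact ⟨0, by rw [hΓB]; simp [h]⟩
    · obtain ⟨i, hi⟩ := hΓf j
      rcases interleave_cases PA PB i with ⟨k, hk⟩ | ⟨k, hk⟩
      · exact absurd (hi.trans (hk ▸ piece_subset hPA k)) h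
      · exact ⟨k, (hBsubΓ j).trans (hi.trans (hk ▸ subset_rfl))⟩
  have hTA : IsSampling ΓA T := by
    intro j hne
    have h : Γ j ⊆ A := by
      by_contra h
      rw [hΓA] at hne; simp [h] at hne
    have h2 : ΓA j = Γ j := by rw [hΓA]; simp [h]
    rw [h2] at hne ⊢
    exact hT j hne
  have hTB : IsSampling ΓB T := by
    intro j hne
    by_cases h : Γ j ⊆ A
    · rw [hΓB] at hne; simp [h] at hne
    · have h2 : ΓB j = Γ j := by rw [hΓB]; simp [h]
      rw [h2] at hne ⊢
      exact hT j hne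
  obtain ⟨ca, la⟩ := hPA2 ΓA hpartA hfA T hTA
  obtain ⟨cb, lb⟩ := hPB2 ΓB hpartB hfB T hTB
  have hterm : ∀ j, (μ (Γ j)).toReal • f (T j) =
      (μ (ΓA j)).toReal • f (T j) + (μ (ΓB j)).toReal • f (T j) := by
    intro j; rw [hΓA, hΓB]; by_cases h : Γ j ⊆ A <;> simp [h]
  have htermn : ∀ j, (μ (Γ j)).toReal * ‖f (T j)‖ =
      (μ (ΓA j)).toReal * ‖f (T j)‖ + (μ (ΓB j)).toReal * ‖f (T j)‖ := by
    intro j; rw [hΓA, hΓB]; by_cases h : Γ j ⊆ A <;> simp [h]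
  have hca : Summable fun j => (μ (ΓA j)).toReal * ‖f (T j)‖ := ca
  have hcb : Summable fun j => (μ (ΓB j)).toReal * ‖f (T j)‖ := cb
  have habs : RLSumAbsConv μ f Γ T :=
    (hca.add hcb).congr fun j => (htermn j).symm
  refine ⟨habs, ?_⟩
  have hsum : RLSum μ f Γ T = RLSum μ f ΓA T + RLSum μ f ΓB T := by
    rw [RLSum, RLSum, RLSum,
      ← Summable.tsum_add (summable_vec_of_absconv ca) (summable_vec_of_absconv cb)]
    exact tsum_congr hterm
  rw [hsum]
  have hre : RLSum μ f ΓA T + RLSum μ f ΓB T - (a + b) =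
      (RLSum μ f ΓA T - a) + (RLSum μ f ΓB T - b) := by abel
  rw [hre]
  calc ‖(RLSum μ f ΓA T - a) + (RLSum μ f ΓB T - b)‖
      ≤ ‖RLSum μ f ΓA T - a‖ + ‖RLSum μ f ΓB T - b‖ := norm_add_le _ _
    _ < ε / 2 + ε / 2 := add_lt_add la lb
    _ = ε := by ring


variable {pt : Set Ω → Ω}

lemma nu_union (hpt : ∀ S : Set Ω, S.Nonempty → pt S ∈ S) {ν : Set Ω → X}
    (hν : ∀ A : Set Ω, MeasurableSet A → HasRLIntegral μ f A (ν A))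
    {A B : Set Ω} (hA : MeasurableSet A) (hB : MeasurableSet B) (hAB : Disjoint A B) :
    ν (A ∪ B) = ν A + ν B :=
  integral_unique pt hpt (hν _ (hA.union hB))
    (hasRL_union hA hB hAB (hν A hA) (hν B hB))

lemma nu_empty (hpt : ∀ S : Set Ω, S.Nonempty → pt S ∈ S) {ν : Set Ω → X}
    (hν : ∀ A : Set Ω, MeasurableSet A → HasRLIntegral μ f A (ν A)) :
    ν ∅ = 0 :=
  integral_unique pt hpt (hν ∅ MeasurableSet.empty)
    (hasRL_null MeasurableSet.empty measure_empty)

lemma nu_biUnion (hpt : ∀ S : Set Ω, S.Nonempty → pt S ∈ S) {ν : Set Ω → X}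
    (hν : ∀ A : Set Ω, MeasurableSet A → HasRLIntegral μ f A (ν A))
    {s : ℕ → Set Ω} (hms : ∀ i, MeasurableSet (s i))
    (hds : Pairwise (Function.onFun Disjoint s)) (n : ℕ) :
    ν (⋃ i ∈ Finset.range n, s i) = ∑ i ∈ Finset.range n, ν (s i) := by
  induction n with
  | zero => simpa using nu_empty hpt hν
  | succ m ih =>
      have h1 : (⋃ i ∈ Finset.range (m + 1), s i) =
          s m ∪ ⋃ i ∈ Finset.range m, s i := by
        rw [Finset.range_add_one, Finset.set_biUnion_insert]
      have hd : Disjoint (s m) (⋃ i ∈ Finset.range m, s i) := by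
        rw [Set.disjoint_iUnion₂_right]
        intro i hi
        have hlt : i < m := Finset.mem_range.1 hi
        exact hds (by omega)
      rw [h1, nu_union hpt hν (hms m)
        (Finset.measurableSet_biUnion _ (fun i _ => hms i)) hd, ih,
        Finset.range_add_one, Finset.sum_insert Finset.notMem_range_self]

set_option maxHeartbeats 1000000 in
lemma variation_bound (hpt : ∀ S : Set Ω, S.Nonempty → pt S ∈ S) {x : X}
    (hx : HasRLIntegral μ f univ x) {ν : Set Ω → X}
    (hν : ∀ A : Set Ω, MeasurableSet A → HasRLIntegral μ f A (ν A)) :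
    ∃ C : ℝ, ∀ (n : ℕ) (s : Fin n → Set Ω), (∀ i, MeasurableSet (s i)) →
      Pairwise (Function.onFun Disjoint s) → ∑ i, ‖ν (s i)‖ ≤ C := by
  obtain ⟨M, hMfin, P1, hP1, hbound⟩ := abs_bound hx pt hpt
  refine ⟨M.toReal + 1, ?_⟩
  intro n s hms hds
  have hstep : ∀ i : Fin n, ∃ G : ℕ → Set Ω, IsRLPartition (s i) G ∧
      IsFinerPartition G P1 ∧
      RLSumAbsConv μ f G (fun j => pt (G j)) ∧
      ‖RLSum μ f G (fun j => pt (G j)) - ν (s i)‖ < 1 / (n + 1) := by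
    intro i
    obtain ⟨Q, hQ, hQ2⟩ := hν (s i) (hms i) (1 / (n + 1)) (by positivity)
    refine ⟨refinePair Q (fun k => P1 k ∩ s i),
      isRLPartition_refinePair hQ (isRLPartition_inter hP1 (hms i)),
      finer_trans (refinePair_finer_right _ _) (finer_inter _ _), ?_⟩
    exact hQ2 _ (isRLPartition_refinePair hQ (isRLPartition_inter hP1 (hms i)))
      (refinePair_finer_left _ _) _ (fun j h => hpt _ h)
  choose G hGpart hGfiner hGconv hGlt using hstep
  set Δ : Fin n × ℕ → Set Ω := fun p => G p.1 p.2 with hΔ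
  set tt : Fin n × ℕ → Ω := fun p => pt (G p.1 p.2) with htt
  have hkey : ∑' p : Fin n × ℕ, μ (Δ p) * (‖f (tt p)‖₊ : ℝ≥0∞) ≤ M := by
    refine hbound Δ tt (fun p => (hGpart p.1).1 p.2) ?_ (fun p => hGfiner p.1 p.2)
      (fun p h => hpt _ h)
    rintro ⟨i, j⟩ ⟨i', j'⟩ hpq
    by_cases h1 : i = i'
    · subst h1
      have h2 : j ≠ j' := fun h2 => hpq (by rw [h2])
      exact (hGpart i).2.1 h2
    · exact Disjoint.mono (piece_subset (hGpart i) j) (piece_subset (hGpart i') j')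
        (hds h1)
  set aE : Fin n → ℝ≥0∞ := fun i => ∑' j, μ (G i j) * (‖f (pt (G i j))‖₊ : ℝ≥0∞)
    with haE
  have hsplit : ∑ i, aE i = ∑' p : Fin n × ℕ, μ (Δ p) * (‖f (tt p)‖₊ : ℝ≥0∞) := by
    rw [ENNReal.tsum_prod', tsum_fintype]
  have hsumle : ∑ i, aE i ≤ M := hsplit ▸ hkey
  have haEfin : ∀ i, aE i ≠ ∞ := by
    intro i
    refine ne_top_of_le_ne_top hMfin (le_trans ?_ hsumle)
    exact Finset.single_le_sum (fun j _ => zero_le) (Finset.mem_univ i)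
  have htermfin : ∀ (i : Fin n) (j : ℕ),
      μ (G i j) * (‖f (pt (G i j))‖₊ : ℝ≥0∞) ≠ ∞ :=
    fun i j => ENNReal.mul_ne_top (measure_ne_top μ _) ENNReal.coe_ne_top
  have hnorm : ∀ i : Fin n, ‖ν (s i)‖ ≤ 1 / (n + 1) + (aE i).toReal := by
    intro i
    have h1 := hGlt i
    have h2 : ‖ν (s i)‖ ≤ ‖RLSum μ f (G i) (fun j => pt (G i j))‖ +
        ‖RLSum μ f (G i) (fun j => pt (G i j)) - ν (s i)‖ := by
      have := norm_add_le (RLSum μ f (G i) (fun j => pt (G i j)) - ν (s i))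
        (ν (s i) - RLSum μ f (G i) (fun j => pt (G i j)) + ν (s i))
      have h4 := norm_sub_le_norm_sub_add_norm_sub (ν (s i)) (RLSum μ f (G i) (fun j => pt (G i j))) 0
      simp only [sub_zero] at h4
      rw [norm_sub_rev (ν (s i))] at h4
      linarith
    have h3 : ‖RLSum μ f (G i) (fun j => pt (G i j))‖ ≤ (aE i).toReal := by
      refine le_trans (norm_rlsum_le (hGconv i)) ?_
      rw [haE]
      rw [ENNReal.tsum_toReal_eq (htermfin i)]
      refine le_of_eq (tsum_congr fun j => ?_)
      rw [ENNReal.toReal_mul]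
      simp
    linarith
  have hc1 : ∑ i : Fin n, (1 / ((n:ℝ) + 1) + (aE i).toReal) =
      n * (1 / ((n:ℝ) + 1)) + ∑ i : Fin n, (aE i).toReal := by
    rw [Finset.sum_add_distrib, Finset.sum_const, Finset.card_univ, Fintype.card_fin]
    simp [nsmul_eq_mul]
  have hc2 : ∑ i : Fin n, (aE i).toReal ≤ M.toReal := by
    rw [← ENNReal.toReal_sum (fun i _ => haEfin i)]
    exact ENNReal.toReal_mono hMfin hsumle
  have hc3 : (n:ℝ) * (1 / ((n:ℝ) + 1)) ≤ 1 := by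
    rw [mul_one_div]
    rw [div_le_one (by positivity)]
    linarith
  calc ∑ i, ‖ν (s i)‖ ≤ ∑ i : Fin n, (1 / ((n:ℝ) + 1) + (aE i).toReal) :=
        Finset.sum_le_sum fun i _ => hnorm i
    _ = n * (1 / ((n:ℝ) + 1)) + ∑ i : Fin n, (aE i).toReal := hc1
    _ ≤ 1 + M.toReal := add_le_add hc3 hc2
    _ = M.toReal + 1 := by ring


lemma absconv_iff_tsum_ne_top {ι : Type*} (Δ : ι → Set Ω) (t : ι → Ω) :
    (Summable fun j => (μ (Δ j)).toReal * ‖f (t j)‖) ↔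
      ∑' j, μ (Δ j) * (‖f (t j)‖₊ : ℝ≥0∞) ≠ ∞ := by
  classical
  set g : ι → NNReal := fun j => (μ (Δ j)).toNNReal * ‖f (t j)‖₊ with hg
  have h1 : (fun j => (μ (Δ j)).toReal * ‖f (t j)‖) = fun j => ((g j : ℝ)) := by
    funext j; simp [hg, NNReal.coe_mul, ENNReal.toReal]
  have h2 : ∀ j, (g j : ℝ≥0∞) = μ (Δ j) * ‖f (t j)‖₊ := by
    intro j; simp [hg, ENNReal.coe_mul, ENNReal.coe_toNNReal (measure_ne_top μ _)]
  rw [h1, NNReal.summable_coe, ← ENNReal.tsum_coe_ne_top_iff_summable,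
    tsum_congr h2]

lemma tsum_toReal_absconv {ι : Type*} (Δ : ι → Set Ω) (t : ι → Ω) :
    (∑' j, μ (Δ j) * (‖f (t j)‖₊ : ℝ≥0∞)).toReal =
      ∑' j, (μ (Δ j)).toReal * ‖f (t j)‖ := by
  rw [ENNReal.tsum_toReal_eq
    (fun j => ENNReal.mul_ne_top (measure_ne_top μ _) ENNReal.coe_ne_top)]
  exact tsum_congr fun j => by rw [ENNReal.toReal_mul]; simp

lemma isRLPartition_doubleInter {P : ℕ → Set Ω} (hP : IsRLPartition univ P)
    {s : ℕ → Set Ω} (hms : ∀ i, MeasurableSet (s i))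
    (hds : Pairwise (Function.onFun Disjoint s)) :
    IsRLPartition (⋃ i, s i) (fun k => P (Nat.unpair k).1 ∩ s (Nat.unpair k).2) := by
  refine ⟨fun k => (hP.1 _).inter (hms _), ?_, ?_⟩
  · intro k l hkl
    have h2 : Nat.unpair k ≠ Nat.unpair l := fun h => hkl (unpair_injective h)
    by_cases hc : (Nat.unpair k).1 = (Nat.unpair l).1
    · have h3 : (Nat.unpair k).2 ≠ (Nat.unpair l).2 := fun h => h2 (Prod.ext hc h)
      exact Disjoint.mono inter_subset_right inter_subset_right (hds h3)
    · exact Disjoint.mono inter_subset_left inter_subset_left (hP.2.1 hc)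
  · ext t
    simp only [mem_iUnion, mem_inter_iff]
    constructor
    · rintro ⟨k, -, h2⟩; exact ⟨_, h2⟩
    · rintro ⟨j, hj⟩
      have h1 : t ∈ ⋃ i, P i := by rw [hP.2.2]; trivial
      obtain ⟨i, hi⟩ := mem_iUnion.1 h1
      exact ⟨Nat.pair i j, by rw [Nat.unpair_pair]; exact ⟨hi, hj⟩⟩

lemma finer_doubleInter (P : ℕ → Set Ω) (s : ℕ → Set Ω) :
    IsFinerPartition (fun k => P (Nat.unpair k).1 ∩ s (Nat.unpair k).2) P :=
  fun k => ⟨(Nat.unpair k).1, inter_subset_left⟩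


set_option maxHeartbeats 2000000 in
lemma nu_countably_additive (hpt : ∀ S : Set Ω, S.Nonempty → pt S ∈ S) {x : X}
    (hx : HasRLIntegral μ f univ x) {ν : Set Ω → X}
    (hν : ∀ A : Set Ω, MeasurableSet A → HasRLIntegral μ f A (ν A))
    (s : ℕ → Set Ω) (hms : ∀ i, MeasurableSet (s i))
    (hds : Pairwise (Function.onFun Disjoint s)) :
    HasSum (fun i => ν (s i)) (ν (⋃ i, s i)) := by
  classical
  obtain ⟨C, hC⟩ := variation_bound hpt hx hν
  have hsumnorm : Summable fun i => ‖ν (s i)‖ := by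
    refine summable_of_sum_range_le (c := C) (fun n => norm_nonneg _) fun n => ?_
    have h1 := hC n (fun i : Fin n => s i) (fun i => hms i)
      (fun i j hij => hds (fun h => hij (Fin.ext h)))
    rwa [Fin.sum_univ_eq_sum_range (fun i => ‖ν (s i)‖) n] at h1
  have hsummable : Summable fun i => ν (s i) := Summable.of_norm hsumnorm
  set U := ⋃ i, s i with hU
  have hUmeas : MeasurableSet U := MeasurableSet.iUnion hms
  set Tl : ℕ → Set Ω := fun n => ⋃ j, s (j + n) with hTl
  have hTlmeas : ∀ n, MeasurableSet (Tl n) :=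
    fun n => MeasurableSet.iUnion fun j => hms (j + n)
  have hdecomp : ∀ n, ν U = ∑ i ∈ Finset.range n, ν (s i) + ν (Tl n) := by
    intro n
    have h1 : U = (⋃ i ∈ Finset.range n, s i) ∪ Tl n := by
      ext t
      simp only [hU, hTl, mem_iUnion, mem_union, Finset.mem_range]
      constructor
      · rintro ⟨i, hi⟩
        rcases Nat.lt_or_ge i n with h | h
        · exact Or.inl ⟨i, h, hi⟩
        · exact Or.inr ⟨i - n, by rwa [Nat.sub_add_cancel h]⟩
      · rintro (⟨i, -, hi⟩ | ⟨j, hj⟩)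
        · exact ⟨i, hi⟩
        · exact ⟨j + n, hj⟩
    have hd : Disjoint (⋃ i ∈ Finset.range n, s i) (Tl n) := by
      rw [Set.disjoint_iUnion₂_left]
      intro i hi
      rw [hTl, Set.disjoint_iUnion_right]
      intro j
      exact hds (show i ≠ j + n by have := Finset.mem_range.1 hi; omega)
    rw [h1, nu_union hpt hν (Finset.measurableSet_biUnion _ fun i _ => hms i)
      (hTlmeas n) hd, nu_biUnion hpt hν hms hds n]
  have htail : Tendsto (fun n => ν (Tl n)) atTop (𝓝 0) := by
    rw [Metric.tendsto_atTop]
    intro ε hε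
    set ε' := ε / 5 with hε'
    have hε'pos : 0 < ε' := by positivity
    obtain ⟨Pe, hPe, hPeC⟩ := cauchy_pieces hx pt hpt hε'pos
    set Δ : ℕ × ℕ → Set Ω := fun p => Pe p.1 ∩ s p.2 with hΔ
    set τ : ℕ × ℕ → Ω := fun p => pt (Δ p) with hτ
    set W1 : ℕ → Set Ω := fun k => Δ (Nat.unpair k) with hW1
    have hW1part : IsRLPartition U W1 := isRLPartition_doubleInter hPe hms hds
    have hW1finer : IsFinerPartition W1 Pe := finer_doubleInter Pe s
    set W2 : ℕ → Set Ω := fun i => Pe i ∩ Uᶜ with hW2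
    have hW2part : IsRLPartition Uᶜ W2 := isRLPartition_inter hPe hUmeas.compl
    set W := interleave W1 W2 with hW
    have hWpart : IsRLPartition univ W := by
      have := isRLPartition_interleave disjoint_compl_right hW1part hW2part
      rwa [union_compl_self] at this
    have hWfiner : IsFinerPartition W Pe :=
      finer_interleave hW1finer (finer_inter _ _)
    set WT := interleaveT (fun k => pt (W1 k)) (fun i => pt (W2 i)) with hWT
    have hWsamp : IsSampling W WT :=
      isSampling_interleave (fun k h => hpt _ h) (fun i h => hpt _ h)
    have hWconv : RLSumAbsConv μ f W WT :=
      (hPeC univ MeasurableSet.univ W W hWpart hWfiner hWpart hWfiner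
        WT WT hWsamp hWsamp).1
    have hW1conv : RLSumAbsConv μ f W1 (fun k => pt (W1 k)) :=
      (interleave_split hWconv).1
    have hfinE : ∑' p : ℕ × ℕ, μ (Δ p) * (‖f (τ p)‖₊ : ℝ≥0∞) ≠ ∞ := by
      have h1 : ∑' k, μ (W1 k) * (‖f (pt (W1 k))‖₊ : ℝ≥0∞) ≠ ∞ :=
        (absconv_iff_tsum_ne_top W1 (fun k => pt (W1 k))).1 hW1conv
      have h2 := Equiv.tsum_eq Nat.pairEquiv.symm
        (fun p : ℕ × ℕ => μ (Δ p) * (‖f (τ p)‖₊ : ℝ≥0∞))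
      rw [← h2]
      exact h1
    set bE : ℕ → ℝ≥0∞ := fun j => ∑' i, μ (Δ (i, j)) * (‖f (τ (i, j))‖₊ : ℝ≥0∞)
      with hbE
    have hbEsum : ∑' j, bE j ≠ ∞ := by
      have hcomm : ∑' j, bE j = ∑' p : ℕ × ℕ, μ (Δ p) * (‖f (τ p)‖₊ : ℝ≥0∞) := by
        calc ∑' j, bE j = ∑' j, ∑' i, μ (Δ (i, j)) * (‖f (τ (i, j))‖₊ : ℝ≥0∞) := rfl
          _ = ∑' i, ∑' j, μ (Δ (i, j)) * (‖f (τ (i, j))‖₊ : ℝ≥0∞) :=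
              (ENNReal.tsum_comm (f := fun i j => μ (Δ (i, j)) * (‖f (τ (i, j))‖₊ : ℝ≥0∞))).symm
          _ = ∑' p : ℕ × ℕ, μ (Δ p) * (‖f (τ p)‖₊ : ℝ≥0∞) :=
              (ENNReal.tsum_prod' (f := fun p : ℕ × ℕ => μ (Δ p) * (‖f (τ p)‖₊ : ℝ≥0∞))).symm
      rw [hcomm]
      exact hfinE
    have htailE := ENNReal.tendsto_sum_nat_add bE hbEsum
    have hevent : ∀ᶠ n in atTop,
        (∑' k, bE (k + n)) < ENNReal.ofReal ε' :=
      htailE.eventually_lt_const (by simp [hε'pos])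
    obtain ⟨N, hN⟩ := Filter.eventually_atTop.1 hevent
    refine ⟨N, fun n hn => ?_⟩
    rw [dist_zero_right]
    -- the canonical partition of the tail
    set V : ℕ → Set Ω := fun k => Pe (Nat.unpair k).1 ∩ s ((Nat.unpair k).2 + n)
      with hV
    have hVpart : IsRLPartition (Tl n) V :=
      isRLPartition_doubleInter hPe (fun j => hms (j + n))
        (fun i j hij => hds (by omega))
    have hVfiner : IsFinerPartition V Pe := finer_doubleInter Pe (fun j => s (j + n))
    have hVsamp : IsSampling V (fun k => pt (V k)) := fun k h => hpt _ h
    -- identification of the V-sum with the ENNReal tail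
    have hVid : ∑' k, μ (V k) * (‖f (pt (V k))‖₊ : ℝ≥0∞) = ∑' k, bE (k + n) := by
      have hid : ∀ p : ℕ × ℕ, Pe p.1 ∩ s (p.2 + n) = Δ (p.1, p.2 + n) := fun p => rfl
      have h2 := Equiv.tsum_eq Nat.pairEquiv.symm
        (fun p : ℕ × ℕ => μ (Δ (p.1, p.2 + n)) * (‖f (τ (p.1, p.2 + n))‖₊ : ℝ≥0∞))
      have h3 : ∑' k, μ (V k) * (‖f (pt (V k))‖₊ : ℝ≥0∞) =
          ∑' p : ℕ × ℕ, μ (Δ (p.1, p.2 + n)) * (‖f (τ (p.1, p.2 + n))‖₊ : ℝ≥0∞) := by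
        rw [← h2]
        exact tsum_congr fun k => rfl
      rw [h3, ENNReal.tsum_prod']
      calc ∑' i, ∑' j, μ (Δ (i, j + n)) * (‖f (τ (i, j + n))‖₊ : ℝ≥0∞)
          = ∑' j, ∑' i, μ (Δ (i, j + n)) * (‖f (τ (i, j + n))‖₊ : ℝ≥0∞) :=
            ENNReal.tsum_comm (f := fun i j => μ (Δ (i, j + n)) * (‖f (τ (i, j + n))‖₊ : ℝ≥0∞))
        _ = ∑' k, bE (k + n) := tsum_congr fun j => rfl
    have hVfin : ∑' k, μ (V k) * (‖f (pt (V k))‖₊ : ℝ≥0∞) ≠ ∞ := by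
      rw [hVid]
      exact ne_top_of_lt (hN n hn)
    have hVconv : RLSumAbsConv μ f V (fun k => pt (V k)) :=
      (absconv_iff_tsum_ne_top V (fun k => pt (V k))).2 hVfin
    have hVabs : ∑' k, (μ (V k)).toReal * ‖f (pt (V k))‖ ≤ ε' := by
      rw [← tsum_toReal_absconv V (fun k => pt (V k)), hVid]
      calc (∑' k, bE (k + n)).toReal ≤ (ENNReal.ofReal ε').toReal :=
            ENNReal.toReal_mono ENNReal.ofReal_ne_top (hN n hn).le
        _ = ε' := ENNReal.toReal_ofReal hε'pos.le
    have hVnorm : ‖RLSum μ f V (fun k => pt (V k))‖ ≤ ε' :=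
      le_trans (norm_rlsum_le hVconv) hVabs
    -- compare with the actual integral over the tail
    obtain ⟨Q, hQ, hQ2⟩ := hν (Tl n) (hTlmeas n) ε' hε'pos
    have hΓpart : IsRLPartition (Tl n) (refinePair Q V) :=
      isRLPartition_refinePair hQ hVpart
    obtain ⟨hΓconv, hΓlt⟩ := hQ2 (refinePair Q V) hΓpart
      (refinePair_finer_left _ _) (fun j => pt (refinePair Q V j)) (fun j h => hpt _ h)
    have hΓfiner : IsFinerPartition (refinePair Q V) Pe :=
      finer_trans (refinePair_finer_right _ _) hVfiner
    have hcd := (hPeC (Tl n) (hTlmeas n) (refinePair Q V) V hΓpart hΓfiner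
      hVpart hVfiner (fun j => pt (refinePair Q V j)) (fun k => pt (V k))
      (fun j h => hpt _ h) hVsamp).2
    set SG := RLSum μ f (refinePair Q V) (fun j => pt (refinePair Q V j)) with hSG
    set SV := RLSum μ f V (fun k => pt (V k)) with hSV
    have habel : ν (Tl n) = -(SG - ν (Tl n)) + (SG - SV) + SV := by abel
    have hfinal : ‖ν (Tl n)‖ ≤ ‖SG - ν (Tl n)‖ + ‖SG - SV‖ + ‖SV‖ := by
      calc ‖ν (Tl n)‖ = ‖-(SG - ν (Tl n)) + (SG - SV) + SV‖ := by rw [← habel]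
        _ ≤ ‖-(SG - ν (Tl n))‖ + ‖SG - SV‖ + ‖SV‖ := norm_add₃_le
        _ = ‖SG - ν (Tl n)‖ + ‖SG - SV‖ + ‖SV‖ := by rw [norm_neg]
    have h2e : ‖SG - SV‖ ≤ 2 * ε' := hcd
    have : ‖ν (Tl n)‖ < 4 * ε' := by linarith
    calc ‖ν (Tl n)‖ < 4 * ε' := this
      _ < ε := by rw [hε']; linarith
  -- conclude
  have hpartial : Tendsto (fun n => ∑ i ∈ Finset.range n, ν (s i)) atTop (𝓝 (ν U)) := by
    have heq : (fun n => ∑ i ∈ Finset.range n, ν (s i)) = fun n => ν U - ν (Tl n) := by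
      funext n
      rw [hdecomp n]; abel
    rw [heq]
    simpa using tendsto_const_nhds.sub htail
  have hhs : HasSum (fun i => ν (s i)) (∑' i, ν (s i)) := hsummable.hasSum
  have heq2 : ν U = ∑' i, ν (s i) :=
    tendsto_nhds_unique hpartial hhs.tendsto_sum_nat
  rw [hU] at heq2
  rw [heq2]
  exact hhs


end RLAux


/-- If `X` has the Radon–Nikodým property with respect to `μ` (every countably
additive `X`-valued vector measure of bounded variation vanishing on `μ`-null sets has a
Bochner-integrable density), then every RL-integrable `f : Ω → X` has a Bochner-integrable
equivalent. -/
theorem bochnerEquivalent_of_RNP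
    {Ω X : Type*} [MeasurableSpace Ω] [NormedAddCommGroup X] [NormedSpace ℝ X] [CompleteSpace X]
    (μ : Measure Ω) [IsFiniteMeasure μ]
    (hRNP : ∀ ν : Set Ω → X,
      (∀ s : ℕ → Set Ω, (∀ i, MeasurableSet (s i)) → Pairwise (Function.onFun Disjoint s) →
        HasSum (fun i => ν (s i)) (ν (⋃ i, s i))) →
      (∃ C : ℝ, ∀ (n : ℕ) (s : Fin n → Set Ω), (∀ i, MeasurableSet (s i)) →
        Pairwise (Function.onFun Disjoint s) → ∑ i, ‖ν (s i)‖ ≤ C) →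
      (∀ A : Set Ω, MeasurableSet A → μ A = 0 → ν A = 0) →
      ∃ g : Ω → X, Integrable g μ ∧ ∀ A : Set Ω, MeasurableSet A → ν A = ∫ ω in A, g ω ∂μ)
    (f : Ω → X) (hf : ∃ x, HasRLIntegral μ f Set.univ x) :
    ∃ g : Ω → X, BochnerEquivalent μ f g := by
  classical
  obtain ⟨x, hx⟩ := hf
  rcases isEmpty_or_nonempty Ω with hΩ | hΩ
  · refine ⟨0, integrable_zero _ _ _, ?_⟩
    intro A hA ε hε
    refine ⟨fun _ => (∅ : Set Ω), ⟨fun _ => MeasurableSet.empty,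
      fun i j hij => by simp [Function.onFun], ?_⟩, ?_⟩
    · have hAe : A = (∅ : Set Ω) := Set.eq_empty_of_isEmpty A
      rw [hAe]; simp
    · intro Γ hΓ hΓf T hT
      exact (IsEmpty.false (T 0)).elim
  set pt : Set Ω → Ω := fun S => if h : S.Nonempty then h.choose else Classical.arbitrary Ω
    with hptdef
  have hpt : ∀ S : Set Ω, S.Nonempty → pt S ∈ S := by
    intro S h
    rw [hptdef]
    simp only [dif_pos h]
    exact h.choose_spec
  set ν : Set Ω → X := fun A => if h : ∃ y, HasRLIntegral μ f A y then h.choose else 0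
    with hνdef
  have hνspec : ∀ A : Set Ω, MeasurableSet A → HasRLIntegral μ f A (ν A) := by
    intro A hA
    have hex := RLAux.exists_hasRLIntegral hx pt hpt hA
    rw [hνdef]
    simp only [dif_pos hex]
    exact hex.choose_spec
  obtain ⟨g, hgint, hgeq⟩ := hRNP ν
    (fun s hms hds => RLAux.nu_countably_additive hpt hx hνspec s hms hds)
    (RLAux.variation_bound hpt hx hνspec)
    (fun A hA h0 => RLAux.integral_unique pt hpt (hνspec A hA) (RLAux.hasRL_null hA h0))
  refine ⟨g, hgint, ?_⟩
  intro A hA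
  rw [← hgeq A hA]
  exact hνspec A hA
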